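/- Let N, m ≥ 1, let A ∈ ℝ^{N×N} be a matrix such that for every row i and every column index i' not in I_max(A_i) one has A_{i,i'} ≤ (max_{i''} A_{i,i''}) − 1, and let V ∈ ℝ^{N×m} be a matrix with all entries in {0,1,2}. Then for every real c > 0, every entry of the matrix softmax(c·A)·V − hardmax(A)·V has absolute value at most 2·N²·e^{−c}. In particular, taking c = Θ(log N) makes the entrywise error an arbitrarily small inverse polynomial in N. -/

import Mathlib

open scoped BigOperators

/-- softmax(v)_i = exp(v_i) / ∑_j exp(v_j). -/
noncomputable def softmax {n : ℕ} (v : Fin n → ℝ) : Fin n → ℝ :=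
  fun i => Real.exp (v i) / ∑ j, Real.exp (v j)

open Classical in
/-- hardmax(v)_i = 1/|I_max(v)| if v_i attains the maximum, and 0 otherwise. -/
noncomputable def hardmax {n : ℕ} (v : Fin n → ℝ) : Fin n → ℝ :=
  fun i => if v i = ⨆ j, v j then
    1 / ((Finset.univ.filter fun j => v j = ⨆ j', v j').card : ℝ)
  else 0

/-- Row-wise softmax of a matrix. -/
noncomputable def msoftmax {n k : ℕ} (A : Matrix (Fin n) (Fin k) ℝ) :
    Matrix (Fin n) (Fin k) ℝ :=
  Matrix.of fun i => softmax (A i)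

/-- Row-wise hardmax of a matrix. -/
noncomputable def mhardmax {n k : ℕ} (A : Matrix (Fin n) (Fin k) ℝ) :
    Matrix (Fin n) (Fin k) ℝ :=
  Matrix.of fun i => hardmax (A i)

/-- If in every row of `A` each non-maximal entry is at most the row maximum minus 1,
and all entries of `V` lie in {0,1,2}, then for every `c > 0` every entry of
`softmax(c·A)·V − hardmax(A)·V` has absolute value at most `2·N²·e^{-c}`. -/
theorem softmax_attention_approx_hardmax_attention {N m : ℕ} (hN : 1 ≤ N) (hm : 1 ≤ m)
    (A : Matrix (Fin N) (Fin N) ℝ)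
    (hgap : ∀ i i' : Fin N, A i i' ≠ (⨆ i'', A i i'') → A i i' ≤ (⨆ i'', A i i'') - 1)
    (V : Matrix (Fin N) (Fin m) ℝ)
    (hV : ∀ i j, V i j = 0 ∨ V i j = 1 ∨ V i j = 2) :
    ∀ c : ℝ, 0 < c → ∀ (i : Fin N) (j : Fin m),
      |(msoftmax (c • A) * V - mhardmax A * V) i j| ≤ 2 * (N : ℝ) ^ 2 * Real.exp (-c) := by
  classical
  intro c hc i j
  haveI : NeZero N := ⟨by omega⟩
  set v : Fin N → ℝ := A i with hv
  obtain ⟨i0, hi0⟩ := Finite.exists_max v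
  have hM : (⨆ j', v j') = v i0 :=
    le_antisymm (ciSup_le hi0) (le_ciSup (Set.Finite.bddAbove (Set.finite_range v)) i0)
  set M : ℝ := v i0 with hMdef
  set S : Finset (Fin N) := Finset.univ.filter (fun j' => v j' = ⨆ j'', v j'') with hS
  have hmemS : ∀ x, x ∈ S ↔ v x = M := by
    intro x; simp [hS, hM]
  have hi0S : i0 ∈ S := (hmemS i0).mpr rfl
  have hk1 : 1 ≤ S.card := Finset.card_pos.mpr ⟨i0, hi0S⟩
  set k : ℕ := S.card with hkdef
  set Z : ℝ := ∑ i', Real.exp (c * v i') with hZdef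
  have hZsplit : Z = (k : ℝ) * Real.exp (c * M) + ∑ i' ∈ Sᶜ, Real.exp (c * v i') := by
    rw [hZdef, ← Finset.sum_add_sum_compl S]
    congr 1
    rw [Finset.sum_congr rfl (fun x hx => by rw [(hmemS x).mp hx])]
    simp [hkdef]
  set R : ℝ := ∑ i' ∈ Sᶜ, Real.exp (c * v i') with hRdef
  have hRnn : 0 ≤ R := Finset.sum_nonneg fun _ _ => (Real.exp_pos _).le
  have hRle : R ≤ (N : ℝ) * Real.exp (c * M) * Real.exp (-c) := by
    calc R ≤ ∑ _i' ∈ Sᶜ, Real.exp (c * (M - 1)) := by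
          apply Finset.sum_le_sum
          intro x hx
          have hxS : v x ≠ M := fun h => (Finset.mem_compl.mp hx) ((hmemS x).mpr h)
          have : v x ≤ (⨆ i'', v i'') - 1 := hgap i x (by rw [hM]; exact hxS)
          rw [hM] at this
          exact Real.exp_le_exp.mpr (by nlinarith)
      _ = (Sᶜ.card : ℝ) * Real.exp (c * (M - 1)) := by rw [Finset.sum_const, nsmul_eq_mul]
      _ ≤ (N : ℝ) * Real.exp (c * (M - 1)) := by
          apply mul_le_mul_of_nonneg_right _ (Real.exp_pos _).le
          exact_mod_cast (Finset.card_le_univ _).trans_eq (Finset.card_univ.trans rfl) |>.trans (by simp)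
      _ = (N : ℝ) * Real.exp (c * M) * Real.exp (-c) := by
          rw [mul_assoc, ← Real.exp_add]; ring_nf
  have hZpos : 0 < Z :=
    Finset.sum_pos (fun _ _ => Real.exp_pos _) ⟨i0, Finset.mem_univ i0⟩
  have hZge : Real.exp (c * M) ≤ Z := by
    rw [hZsplit]
    nlinarith [Real.exp_pos (c * M), (by exact_mod_cast hk1 : (1:ℝ) ≤ (k:ℝ))]
  -- per-index bound
  have hd : ∀ i' : Fin N, |softmax ((c • A) i) i' - hardmax v i'| ≤ (N : ℝ) * Real.exp (-c) := by
    intro i'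
    have hsm : softmax ((c • A) i) i' = Real.exp (c * v i') / Z := by
      simp only [softmax, Matrix.smul_apply, smul_eq_mul, hZdef, hv]
    by_cases hx : i' ∈ S
    · have hvx : v i' = M := (hmemS i').mp hx
      have hfS : (Finset.univ.filter fun j' => v j' = ⨆ j'', v j'') = S := rfl
      have hhm : hardmax v i' = 1 / (k : ℝ) := by
        simp only [hardmax, hfS, ← hkdef]
        rw [if_pos (by rw [hM]; exact hvx)]
      have hkpos : (0:ℝ) < k := by exact_mod_cast hk1
      have hle : Real.exp (c * M) / Z ≤ 1 / (k : ℝ) := by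
        rw [div_le_div_iff₀ hZpos hkpos]
        rw [hZsplit]; nlinarith [Real.exp_pos (c * M)]
      rw [hsm, hhm, hvx, abs_of_nonpos (by linarith)]
      have heq : 1 / (k : ℝ) - Real.exp (c * M) / Z = R / ((k : ℝ) * Z) := by
        field_simp
        rw [hZsplit]; ring
      rw [neg_sub, heq]
      calc R / ((k : ℝ) * Z) ≤ ((N : ℝ) * Real.exp (c * M) * Real.exp (-c)) / Real.exp (c * M) := by
            apply div_le_div₀ (by positivity) hRle (Real.exp_pos _)
            nlinarith [hZge, hZpos, (by exact_mod_cast hk1 : (1:ℝ) ≤ (k:ℝ))]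
        _ = (N : ℝ) * Real.exp (-c) := by
            field_simp
    · have hvx : v i' ≠ M := fun h => hx ((hmemS i').mpr h)
      have hhm : hardmax v i' = 0 := by
        simp only [hardmax, hM]
        rw [if_neg hvx]
      have hle : v i' ≤ M - 1 := by
        have := hgap i i' (by rw [hM]; exact hvx); rw [hM] at this; exact this
      rw [hsm, hhm, sub_zero, abs_of_nonneg (by positivity)]
      calc Real.exp (c * v i') / Z ≤ Real.exp (c * (M - 1)) / Real.exp (c * M) := by
            apply div_le_div₀ (Real.exp_pos _).le (Real.exp_le_exp.mpr (by nlinarith)) (Real.exp_pos _) hZge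
        _ = Real.exp (-c) := by rw [← Real.exp_sub]; ring_nf
        _ ≤ (N : ℝ) * Real.exp (-c) := by
            nlinarith [Real.exp_pos (-c), (by exact_mod_cast hN : (1:ℝ) ≤ (N:ℝ))]
  -- assemble
  have hentry : (msoftmax (c • A) * V - mhardmax A * V) i j
      = ∑ i', (softmax ((c • A) i) i' - hardmax v i') * V i' j := by
    simp [Matrix.sub_apply, Matrix.mul_apply, msoftmax, mhardmax, sub_mul,
      Finset.sum_sub_distrib, hv]
  rw [hentry]
  calc |∑ i', (softmax ((c • A) i) i' - hardmax v i') * V i' j|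
      ≤ ∑ i', |(softmax ((c • A) i) i' - hardmax v i') * V i' j| := Finset.abs_sum_le_sum_abs _ _
    _ ≤ ∑ _i' : Fin N, ((N : ℝ) * Real.exp (-c)) * 2 := by
        apply Finset.sum_le_sum
        intro x _
        rw [abs_mul]
        apply mul_le_mul (hd x) _ (abs_nonneg _) (by positivity)
        rcases hV x j with h | h | h <;> rw [h] <;> norm_num
    _ = (N : ℝ) * ((N : ℝ) * Real.exp (-c) * 2) := by
        rw [Finset.sum_const, nsmul_eq_mul]; simp
    _ ≤ 2 * (N : ℝ) ^ 2 * Real.exp (-c) := by nlinarith [Real.exp_pos (-c)]
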